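/- Assume δ ≥ κ and there exists a [δ]^{<θ}-normal ideal on P_κ(λ). Then for every A ∈ (NS^{[δ]^{<θ}}_{κ,λ})⁺, cof(NS^{[δ]^{<θ}}_{κ,λ} | A) = 𝔡^{u(θ̄·ℵ₀, |δ|)}_{κ,λ}, where θ̄·ℵ₀ denotes the cardinal product. -/

import Mathlib

open Cardinal Set

namespace PklNormal

/-- `P_κ(l)`: the collection of subsets of (the set of ordinals below) `l`
of cardinality `< κ`. -/
def PSet (κ : Cardinal.{0}) (l : Ordinal.{0}) : Set (Set Ordinal.{0}) :=
  {a | a ⊆ Set.Iio l ∧ #↥a < Cardinal.lift.{1} κ}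

/-- `e ∈ P_{|a ∩ σ|}(a ∩ γ)`. -/
def inP (σ : Cardinal.{0}) (γ : Ordinal.{0}) (a e : Set Ordinal.{0}) : Prop :=
  e ⊆ a ∩ Set.Iio γ ∧ #↥e < #↥(a ∩ Set.Iio σ.ord)

/-- The collection `I_{κ,l}` of non-cofinal subsets of `P_κ(l)`. -/
def Ikl (κ : Cardinal.{0}) (l : Ordinal.{0}) : Set (Set (Set Ordinal.{0})) :=
  {B | B ⊆ PSet κ l ∧ ∃ a ∈ PSet κ l, ∀ b ∈ B, ¬ a ⊆ b}

/-- An ideal on `P_κ(l)`. -/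
structure IsIdeal (κ : Cardinal.{0}) (l : Ordinal.{0})
    (K : Set (Set (Set Ordinal.{0}))) : Prop where
  mem_subset : ∀ B ∈ K, B ⊆ PSet κ l
  subset_mem : ∀ B ∈ K, ∀ C ⊆ B, C ∈ K
  sUnion_mem : ∀ Y ⊆ K, Y.Nonempty → #↥Y < Cardinal.lift.{1} κ → ⋃₀ Y ∈ K
  nonCofinal_subset : Ikl κ l ⊆ K
  univ_not_mem : PSet κ l ∉ K

/-- `K⁺`: the subsets of `P_κ(l)` not in `K`. -/
def plus (κ : Cardinal.{0}) (l : Ordinal.{0}) (K : Set (Set (Set Ordinal.{0}))) :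
    Set (Set (Set Ordinal.{0})) :=
  {B | B ⊆ PSet κ l ∧ B ∉ K}

/-- `K*`: the subsets of `P_κ(l)` whose complement is in `K`. -/
def star (κ : Cardinal.{0}) (l : Ordinal.{0}) (K : Set (Set (Set Ordinal.{0}))) :
    Set (Set (Set Ordinal.{0})) :=
  {B | B ⊆ PSet κ l ∧ PSet κ l \ B ∈ K}

/-- `K|A`. -/
def restrict (κ : Cardinal.{0}) (l : Ordinal.{0}) (K : Set (Set (Set Ordinal.{0})))
    (A : Set (Set Ordinal.{0})) : Set (Set (Set Ordinal.{0})) :=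
  {B | B ⊆ PSet κ l ∧ B ∩ A ∈ K}

/-- `∇^{[γ]^{<σ}} J`. -/
def nabla (κ : Cardinal.{0}) (l : Ordinal.{0}) (σ : Cardinal.{0}) (γ : Ordinal.{0})
    (J : Set (Set (Set Ordinal.{0}))) : Set (Set (Set Ordinal.{0})) :=
  {B | ∃ F : Set Ordinal.{0} → Set (Set Ordinal.{0}),
    (∀ e ∈ PSet σ γ, F e ∈ J) ∧
    B ⊆ {a | a ∈ PSet κ l ∧ a ∩ Set.Iio σ.ord = ∅} ∪
      ⋃ e ∈ PSet σ γ, {a | a ∈ F e ∧ inP σ γ a e}}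

/-- `J` is `[γ]^{<σ}`-normal. -/
def IsNormal (κ : Cardinal.{0}) (l : Ordinal.{0}) (σ : Cardinal.{0}) (γ : Ordinal.{0})
    (J : Set (Set (Set Ordinal.{0}))) : Prop :=
  J = nabla κ l σ γ J

def IsNormalIdeal (κ : Cardinal.{0}) (l : Ordinal.{0}) (σ : Cardinal.{0}) (γ : Ordinal.{0})
    (J : Set (Set (Set Ordinal.{0}))) : Prop :=
  IsIdeal κ l J ∧ IsNormal κ l σ γ J

/-- `N` is the smallest `[γ]^{<σ}`-normal ideal on `P_κ(l)`. -/
def IsLeastNormalIdeal (κ : Cardinal.{0}) (l : Ordinal.{0}) (σ : Cardinal.{0}) (γ : Ordinal.{0})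
    (N : Set (Set (Set Ordinal.{0}))) : Prop :=
  IsNormalIdeal κ l σ γ N ∧ ∀ J, IsNormalIdeal κ l σ γ J → N ⊆ J

/-- `∇^δ K`, the ordinal-indexed diagonal union. -/
def nablaOrd (κ : Cardinal.{0}) (l : Ordinal.{0}) (δ : Ordinal.{0})
    (K : Set (Set (Set Ordinal.{0}))) : Set (Set (Set Ordinal.{0})) :=
  {B | ∃ F : Ordinal.{0} → Set (Set Ordinal.{0}),
    (∀ α < δ, F α ∈ K) ∧
    B ⊆ {a | a ∈ PSet κ l ∧ (0 : Ordinal) ∉ a} ∪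
      ⋃ α ∈ Set.Iio δ, {a | a ∈ F α ∧ α ∈ a}}

/-- `J` is `δ`-normal. -/
def IsOrdNormal (κ : Cardinal.{0}) (l : Ordinal.{0}) (δ : Ordinal.{0})
    (J : Set (Set (Set Ordinal.{0}))) : Prop :=
  J = nablaOrd κ l δ J

/-- `θ̄`: equals `θ` if `θ < κ`, or if `θ = κ` and `κ` is a limit cardinal;
equals `ν` if `θ = κ = ν⁺`. -/
noncomputable def thetaBar (κ θ : Cardinal.{0}) : Cardinal.{0} :=
  haveI := Classical.propDecidable (θ < κ ∨ Order.IsSuccLimit κ)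
  if θ < κ ∨ Order.IsSuccLimit κ then θ else sSup {ν | Order.succ ν = κ}

/-- `cof(K)`: the least number of generators of `K`. -/
noncomputable def cofIdeal (K : Set (Set (Set Ordinal.{0}))) : Cardinal.{1} :=
  sInf {c | ∃ S ⊆ K, #↥S = c ∧ ∀ B ∈ K, ∃ C ∈ S, B ⊆ C}

/-- The dominating number `𝔡^μ_{κ,l}`. -/
noncomputable def dNum (κ : Cardinal.{0}) (l : Ordinal.{0}) (μ : Cardinal.{1}) : Cardinal.{1} :=
  sInf {c | ∃ F : Set (μ.ord.ToType → Set Ordinal.{0}),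
    #↥F = c ∧ (∀ f ∈ F, ∀ i, f i ∈ PSet κ l) ∧
    ∀ g : μ.ord.ToType → Set Ordinal.{0}, (∀ i, g i ∈ PSet κ l) →
      ∃ f ∈ F, ∀ i, g i ⊆ f i}

/-- `u(ρ,μ)`: the least cardinality of a cofinal subset of `(P_ρ(μ), ⊆)`. -/
noncomputable def uNum (ρ μ : Cardinal.{0}) : Cardinal.{1} :=
  sInf {c | ∃ X ⊆ PSet ρ μ.ord, #↥X = c ∧ ∀ e ∈ PSet ρ μ.ord, ∃ x ∈ X, e ⊆ x}

/-- `cov(lam, ν, ν, 2)`: the least cardinality of an `X ⊆ P_ν(lam)` such that every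
member of `P_ν(lam)` is contained in a member of `X`. -/
noncomputable def covNum (lam ν : Cardinal.{0}) : Cardinal.{1} :=
  sInf {c | ∃ X ⊆ PSet ν lam.ord, #↥X = c ∧ ∀ e ∈ PSet ν lam.ord, ∃ x ∈ X, e ⊆ x}

/-- `C` is closed unbounded in `l`. -/
def IsClubIn (C : Set Ordinal.{0}) (l : Ordinal.{0}) : Prop :=
  C ⊆ Set.Iio l ∧ (∀ p < l, ∃ q ∈ C, p < q) ∧
    (∀ o < l, Order.IsSuccLimit o → (∀ p < o, ∃ q ∈ C, p < q ∧ q < o) → o ∈ C)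

/-- `κ` is a Mahlo cardinal: the set of regular cardinals below `κ` is stationary in `κ`. -/
def IsMahlo (κ : Cardinal.{0}) : Prop :=
  ∀ C : Set Ordinal.{0}, IsClubIn C κ.ord →
    ∃ o ∈ C, ∃ ρ : Cardinal.{0}, ρ.IsRegular ∧ ρ.ord = o

noncomputable section Proofs
open Classical
set_option linter.unusedSectionVars false

variable {κ lam θ : Cardinal.{0}} {δ : Ordinal.{0}}

/-- cardinality of `a ∩ θ`. -/
def mTh (θ : Cardinal.{0}) (a : Set Ordinal.{0}) : Cardinal.{1} := #↥(a ∩ Set.Iio θ.ord)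

section Basic

variable (hκ : κ.IsRegular) (hkl : κ ≤ lam) (hθ2 : 2 ≤ θ) (hθκ : θ ≤ κ)
  (hdl : δ ≤ lam.ord) (hκδ : κ.ord ≤ δ)

include hκ in
lemma aleph0_le_liftκ : ℵ₀ ≤ Cardinal.lift.{1} κ := by
  simpa using Cardinal.lift_le.{1}.2 hκ.aleph0_le

include hκ hθκ hκδ in
lemma theta_ord_le_delta : θ.ord ≤ δ := le_trans (Cardinal.ord_le_ord.2 hθκ) hκδ

include hκ hkl hκδ hdl in
lemma kappa_ord_le_l : κ.ord ≤ lam.ord := le_trans hκδ hdl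

include hθ2 in
lemma one_lt_theta_ord : (1 : Ordinal.{0}) < θ.ord := by
  rw [Cardinal.lt_ord]
  simpa using lt_of_lt_of_le one_lt_two hθ2

include hθ2 in
lemma zero_lt_theta_ord : (0 : Ordinal.{0}) < θ.ord :=
  lt_trans zero_lt_one (one_lt_theta_ord hθ2)

include hκ hκδ hdl in
lemma omega_le_l : (Ordinal.omega0) ≤ lam.ord := by
  refine le_trans ?_ (le_trans hκδ hdl)
  rw [← Cardinal.ord_aleph0]
  exact Cardinal.ord_le_ord.2 hκ.aleph0_le

include hκ in
lemma finite_mem_PSet {a : Set Ordinal.{0}} (h1 : a ⊆ Set.Iio lam.ord) (h2 : a.Finite) :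
    a ∈ PSet κ lam.ord :=
  ⟨h1, lt_of_lt_of_le (Cardinal.lt_aleph0_iff_set_finite.2 h2) (aleph0_le_liftκ hκ)⟩

include hκ in
lemma union_mem_PSet {a b : Set Ordinal.{0}} (ha : a ∈ PSet κ lam.ord)
    (hb : b ∈ PSet κ lam.ord) : a ∪ b ∈ PSet κ lam.ord := by
  refine ⟨union_subset ha.1 hb.1, ?_⟩
  exact lt_of_le_of_lt (Cardinal.mk_union_le a b)
    (Cardinal.add_lt_of_lt (aleph0_le_liftκ hκ) ha.2 hb.2)

lemma subset_mem_PSet {a b : Set Ordinal.{0}} (hb : b ∈ PSet κ lam.ord) (h : a ⊆ b) :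
    a ∈ PSet κ lam.ord :=
  ⟨h.trans hb.1, lt_of_le_of_lt (Cardinal.mk_le_mk_of_subset h) hb.2⟩

include hκ in
lemma empty_mem_PSet : (∅ : Set Ordinal.{0}) ∈ PSet κ lam.ord :=
  finite_mem_PSet hκ (empty_subset _) (finite_empty)

include hκ in
lemma singleton_mem_PSet {o : Ordinal.{0}} (h : o < lam.ord) :
    ({o} : Set Ordinal.{0}) ∈ PSet κ lam.ord :=
  finite_mem_PSet hκ (by simpa using h) (finite_singleton o)

lemma mTh_le_lift_theta (a : Set Ordinal.{0}) : mTh θ a ≤ Cardinal.lift.{1} θ := by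
  have := Cardinal.mk_le_mk_of_subset (inter_subset_right (s := a) (t := Set.Iio θ.ord))
  refine le_trans this ?_
  rw [Ordinal.mk_Iio_ordinal, Cardinal.card_ord]

lemma mTh_le_mk (a : Set Ordinal.{0}) : mTh θ a ≤ #↥a :=
  Cardinal.mk_le_mk_of_subset inter_subset_left

lemma mTh_mono {a b : Set Ordinal.{0}} (h : a ⊆ b) : mTh θ a ≤ mTh θ b :=
  Cardinal.mk_le_mk_of_subset (inter_subset_inter_left _ h)

lemma one_le_mTh {a : Set Ordinal.{0}} (h : (a ∩ Set.Iio θ.ord).Nonempty) :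
    1 ≤ mTh θ a := by
  rw [Cardinal.one_le_iff_ne_zero, mTh, Cardinal.mk_ne_zero_iff]
  exact nonempty_coe_sort.2 h

include hθ2 in
lemma pair01_subset_theta : ({0, 1} : Set Ordinal.{0}) ⊆ Set.Iio θ.ord := by
  intro x hx
  rcases hx with rfl | hx
  · exact zero_lt_theta_ord hθ2
  · rcases hx with rfl
    exact one_lt_theta_ord hθ2

include hθ2 in
lemma two_le_mTh_of_pair {a : Set Ordinal.{0}} (h : ({0, 1} : Set Ordinal.{0}) ⊆ a) :
    2 ≤ mTh θ a := by
  have hsub : ({0, 1} : Set Ordinal.{0}) ⊆ a ∩ Set.Iio θ.ord :=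
    subset_inter h (pair01_subset_theta hθ2)
  have h2 : #↥({0, 1} : Set Ordinal.{0}) = 2 := by
    rw [Cardinal.mk_insert (by simp), Cardinal.mk_singleton]
    norm_num
  calc (2 : Cardinal.{1}) = #↥({0, 1} : Set Ordinal.{0}) := h2.symm
    _ ≤ mTh θ a := Cardinal.mk_le_mk_of_subset hsub

/-- The basic non-cofinal sets. -/
lemma notSupset_mem_Ikl {a₀ : Set Ordinal.{0}} (h : a₀ ∈ PSet κ lam.ord) :
    {b | b ∈ PSet κ lam.ord ∧ ¬ a₀ ⊆ b} ∈ Ikl κ lam.ord := by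
  refine ⟨fun b hb => hb.1, a₀, h, ?_⟩
  rintro b ⟨hb1, hb2⟩ hc
  exact hb2 hc

include hκ in
lemma empty_mem_Ikl : (∅ : Set (Set Ordinal.{0})) ∈ Ikl κ lam.ord :=
  ⟨empty_subset _, ∅, empty_mem_PSet hκ, by simp⟩

section IdealFacts

variable {J : Set (Set (Set Ordinal.{0}))} (hJ : IsIdeal κ lam.ord J)
include hκ

include hJ in
lemma union2_mem {B₁ B₂ : Set (Set Ordinal.{0})} (h1 : B₁ ∈ J) (h2 : B₂ ∈ J) :
    B₁ ∪ B₂ ∈ J := by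
  have : B₁ ∪ B₂ = ⋃₀ {B₁, B₂} := by simp
  rw [this]
  refine hJ.sUnion_mem _ ?_ ⟨B₁, by simp⟩ ?_
  · intro B hB
    rcases hB with rfl | hB
    · exact h1
    · simpa using hB ▸ h2
  · refine lt_of_lt_of_le ?_ (aleph0_le_liftκ hκ)
    exact Cardinal.lt_aleph0_iff_set_finite.2 ((Set.finite_singleton B₂).insert B₁)

include hJ in
lemma iUnion_nat_mem (hℵ : ℵ₀ < κ) {T : ℕ → Set (Set Ordinal.{0})}
    (hT : ∀ n, T n ∈ J) : (⋃ n, T n) ∈ J := by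
  have : (⋃ n, T n) = ⋃₀ (Set.range T) := by
    rw [Set.sUnion_range]
  rw [this]
  refine hJ.sUnion_mem _ ?_ ⟨T 0, Set.mem_range_self 0⟩ ?_
  · rintro B ⟨n, rfl⟩; exact hT n
  · have hc : #↥(Set.range T) ≤ ℵ₀ := (Set.countable_range T).le_aleph0
    refine lt_of_le_of_lt hc ?_
    calc (ℵ₀ : Cardinal.{1}) = Cardinal.lift.{1} ℵ₀ := by simp
      _ < Cardinal.lift.{1} κ := Cardinal.lift_lt.2 hℵ

end IdealFacts

lemma Iio_finite_of_lt_omega {o : Ordinal.{0}} (h : o < Ordinal.omega0) :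
    (Set.Iio o).Finite := by
  rw [← Cardinal.lt_aleph0_iff_set_finite, Ordinal.mk_Iio_ordinal]
  have h2 : o.card < ℵ₀ := by
    rcases Ordinal.lt_omega0.1 h with ⟨n, rfl⟩
    simpa using Cardinal.nat_lt_aleph0 n
  simpa using Cardinal.lift_lt.2 h2

lemma add_lt_omega0' {o p : Ordinal.{0}} (h1 : o < Ordinal.omega0)
    (h2 : p < Ordinal.omega0) : o + p < Ordinal.omega0 := by
  rcases Ordinal.lt_omega0.1 h1 with ⟨m, rfl⟩
  rcases Ordinal.lt_omega0.1 h2 with ⟨n, rfl⟩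
  rw [← Nat.cast_add]
  exact Ordinal.nat_lt_omega0 _

include hκ hθ2 hθκ hdl hκδ in
omit hkl in
lemma aleph0_lt_kappa {J : Set (Set (Set Ordinal.{0}))}
    (hJ : IsNormalIdeal κ lam.ord θ δ J) : ℵ₀ < κ := by
  rcases lt_or_ge ℵ₀ κ with h | h
  · exact h
  exfalso
  have hκℵ : κ = ℵ₀ := le_antisymm h hκ.aleph0_le
  have homega : Ordinal.omega0 ≤ δ := by
    rw [hκℵ, Cardinal.ord_aleph0] at hκδ; exact hκδ
  have homegal : Ordinal.omega0 ≤ lam.ord := le_trans homega hdl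
  set F : Set Ordinal.{0} → Set (Set Ordinal.{0}) := fun e =>
    if h : ∃ γ : Ordinal.{0}, γ < Ordinal.omega0 ∧ e = {γ} then
      {b | b ∈ PSet κ lam.ord ∧ ¬ Set.Iio (h.choose + 2) ⊆ b}
    else if e = ∅ then
      {b | b ∈ PSet κ lam.ord ∧ ¬ ({0, 1} : Set Ordinal.{0}) ⊆ b}
    else ∅ with hF
  have hFJ : ∀ e ∈ PSet θ δ, F e ∈ J := by
    intro e _
    by_cases h1 : ∃ γ : Ordinal.{0}, γ < Ordinal.omega0 ∧ e = {γ}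
    · have : F e = {b | b ∈ PSet κ lam.ord ∧ ¬ Set.Iio (h1.choose + 2) ⊆ b} := by
        rw [hF]; simp only [dif_pos h1]
      rw [this]
      refine hJ.1.nonCofinal_subset (notSupset_mem_Ikl ?_)
      refine finite_mem_PSet hκ ?_ (Iio_finite_of_lt_omega ?_)
      · intro x hx
        have h2 : h1.choose + 2 < Ordinal.omega0 := by
          refine add_lt_omega0' h1.choose_spec.1 ?_
          rw [show (2 : Ordinal.{0}) = ((2 : ℕ) : Ordinal.{0}) by simp]
          exact Ordinal.nat_lt_omega0 2
        exact lt_of_lt_of_le (lt_of_lt_of_le hx (le_of_lt h2)) homegal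
      · refine add_lt_omega0' h1.choose_spec.1 ?_
        rw [show (2 : Ordinal.{0}) = ((2 : ℕ) : Ordinal.{0}) by simp]
        exact Ordinal.nat_lt_omega0 2
    · by_cases h2 : e = ∅
      · have : F e = {b | b ∈ PSet κ lam.ord ∧ ¬ ({0, 1} : Set Ordinal.{0}) ⊆ b} := by
          rw [hF]; simp only [dif_neg h1, if_pos h2]
        rw [this]
        refine hJ.1.nonCofinal_subset (notSupset_mem_Ikl ?_)
        refine finite_mem_PSet hκ ?_ ((finite_singleton _).insert _)
        intro x hx
        rcases hx with rfl | hx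
        · exact lt_of_lt_of_le Ordinal.omega0_pos homegal
        · rcases hx with rfl
          exact lt_of_lt_of_le Ordinal.one_lt_omega0 homegal
      · have : F e = ∅ := by rw [hF]; simp only [dif_neg h1, if_neg h2]
        rw [this]
        exact hJ.1.nonCofinal_subset (empty_mem_Ikl hκ)
  have hcover : PSet κ lam.ord ⊆
      {a | a ∈ PSet κ lam.ord ∧ a ∩ Set.Iio θ.ord = ∅} ∪
        ⋃ e ∈ PSet θ δ, {a | a ∈ F e ∧ inP θ δ a e} := by
    intro a ha
    have hafin : a.Finite := by
      rw [← Cardinal.lt_aleph0_iff_set_finite]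
      have := ha.2
      rw [hκℵ] at this
      simpa using this
    by_cases hae : a ∩ Set.Iio θ.ord = ∅
    · exact Or.inl ⟨ha, hae⟩
    right
    have hane : (a ∩ Set.Iio θ.ord).Nonempty := nonempty_iff_ne_empty.2 hae
    by_cases hp : ({0, 1} : Set Ordinal.{0}) ⊆ a
    · -- find the maximum of a ∩ Iio ω
      have hsfin : (a ∩ Set.Iio Ordinal.omega0).Finite := hafin.subset inter_subset_left
      have hsne : (a ∩ Set.Iio Ordinal.omega0).Nonempty :=
        ⟨0, hp (by simp), Ordinal.omega0_pos⟩
      obtain ⟨γ, hγmem, hγmax⟩ : ∃ γ ∈ a ∩ Set.Iio Ordinal.omega0, ∀ a' ∈ a ∩ Set.Iio Ordinal.omega0,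
          id γ ≤ id a' → id γ = id a' := by
        obtain ⟨γ, h1, h2⟩ := Set.Finite.exists_maximalFor id _ hsfin hsne
        exact ⟨γ, h1, fun a' ha' hle => le_antisymm hle (h2 ha' hle)⟩
      have hγa : γ ∈ a := hγmem.1
      have hγω : γ < Ordinal.omega0 := hγmem.2
      have hsucc : γ + 1 ∉ a := by
        intro hmem
        have h1ω : γ + 1 < Ordinal.omega0 := by
          refine add_lt_omega0' hγω ?_
          rw [show (1 : Ordinal.{0}) = ((1 : ℕ) : Ordinal.{0}) by simp]
          exact Ordinal.nat_lt_omega0 1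
        have := hγmax (γ + 1) ⟨hmem, h1ω⟩ (le_of_lt (lt_add_of_pos_right γ zero_lt_one))
        simp only [id] at this
        exact absurd this (by
          intro hh
          have : γ < γ + 1 := lt_add_of_pos_right γ zero_lt_one
          exact absurd hh (ne_of_lt this))
      have heP : ({γ} : Set Ordinal.{0}) ∈ PSet θ δ := by
        refine ⟨by simpa using lt_of_lt_of_le hγω homega, ?_⟩
        rw [Cardinal.mk_singleton]
        calc (1 : Cardinal.{1}) < 2 := one_lt_two
          _ = Cardinal.lift.{1} (2 : Cardinal.{0}) := by simp
          _ ≤ Cardinal.lift.{1} θ := Cardinal.lift_le.2 hθ2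
      refine mem_iUnion₂.2 ⟨{γ}, heP, ?_, ?_⟩
      · -- a ∈ F {γ}
        have h1 : ∃ γ' : Ordinal.{0}, γ' < Ordinal.omega0 ∧ ({γ} : Set Ordinal.{0}) = {γ'} :=
          ⟨γ, hγω, rfl⟩
        have hch : h1.choose = γ := by
          have := h1.choose_spec.2
          exact (Set.singleton_eq_singleton_iff.1 this.symm)
        have : F {γ} = {b | b ∈ PSet κ lam.ord ∧ ¬ Set.Iio (h1.choose + 2) ⊆ b} := by
          rw [hF]; simp only [dif_pos h1]
        rw [this, hch]
        refine ⟨ha, ?_⟩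
        intro hsub
        refine hsucc (hsub ?_)
        have h12 : γ + 1 < γ + 2 := by
          have : (1 : Ordinal.{0}) < 2 := by
            rw [show (1 : Ordinal.{0}) = ((1 : ℕ) : Ordinal.{0}) by simp,
              show (2 : Ordinal.{0}) = ((2 : ℕ) : Ordinal.{0}) by simp]
            exact_mod_cast Nat.one_lt_two
          exact (add_lt_add_iff_left γ).2 this
        exact h12
      · refine ⟨by simpa using ⟨hγa, lt_of_lt_of_le hγω homega⟩, ?_⟩
        rw [Cardinal.mk_singleton]
        exact lt_of_lt_of_le one_lt_two (two_le_mTh_of_pair hθ2 hp)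
    · -- e = ∅ branch
      have heP : (∅ : Set Ordinal.{0}) ∈ PSet θ δ := by
        refine ⟨empty_subset _, ?_⟩
        simpa using lt_of_lt_of_le (Cardinal.lift_lt.{0,1}.2
          (lt_of_lt_of_le two_pos hθ2)) (le_refl _)
      refine mem_iUnion₂.2 ⟨∅, heP, ?_, ?_⟩
      · have h1 : ¬ ∃ γ : Ordinal.{0}, γ < Ordinal.omega0 ∧ (∅ : Set Ordinal.{0}) = {γ} := by
          rintro ⟨γ, -, hh⟩
          exact (Set.singleton_nonempty γ).ne_empty hh.symm
        have : F ∅ = {b | b ∈ PSet κ lam.ord ∧ ¬ ({0, 1} : Set Ordinal.{0}) ⊆ b} := by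
          rw [hF]; simp only [dif_neg h1, if_pos rfl]; simp
        rw [this]
        exact ⟨ha, hp⟩
      · exact ⟨empty_subset _, by
          rw [Cardinal.mk_emptyCollection]
          exact lt_of_lt_of_le zero_lt_one (one_le_mTh hane)⟩
  have : PSet κ lam.ord ∈ nabla κ lam.ord θ δ J := ⟨F, hFJ, hcover⟩
  rw [← hJ.2] at this
  exact hJ.1.univ_not_mem this

end Basic

/-- `c` is a "small subset" of `a` relative to `θ, δ`. -/
def Good (θ : Cardinal.{0}) (δ : Ordinal.{0}) (a c : Set Ordinal.{0}) : Prop :=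
  c ⊆ a ∩ Set.Iio δ ∧ #↥c < ℵ₀ * mTh θ a

/-- The "club" of sets closed under `g`. -/
def Club (κ lam θ : Cardinal.{0}) (δ : Ordinal.{0})
    (g : List (Set Ordinal.{0}) → Set Ordinal.{0}) : Set (Set Ordinal.{0}) :=
  {a | a ∈ PSet κ lam.ord ∧ (a ∩ Set.Iio θ.ord).Nonempty ∧
    ∀ L : List (Set Ordinal.{0}), (∀ c ∈ L, Good θ δ a c) → g L ⊆ a}

section ClubSmall

variable (hκ : κ.IsRegular) (hkl : κ ≤ lam) (hθ2 : 2 ≤ θ) (hθκ : θ ≤ κ)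
  (hdl : δ ≤ lam.ord) (hκδ : κ.ord ≤ δ) (hℵ : ℵ₀ < κ)
  {J : Set (Set (Set Ordinal.{0}))} (hJ : IsNormalIdeal κ lam.ord θ δ J)

include hκ hθ2 hθκ hdl hκδ hℵ hJ
omit hkl

lemma notQ_mem : {a | a ∈ PSet κ lam.ord ∧ ¬ (2 ≤ mTh θ a)} ∈ J := by
  have h01 : ({0, 1} : Set Ordinal.{0}) ∈ PSet κ lam.ord := by
    refine finite_mem_PSet hκ ?_ ((finite_singleton _).insert _)
    intro x hx
    have hω := omega_le_l hκ hdl hκδ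
    rcases hx with rfl | hx
    · exact lt_of_lt_of_le Ordinal.omega0_pos hω
    · rcases hx with rfl
      exact lt_of_lt_of_le Ordinal.one_lt_omega0 hω
  refine hJ.1.subset_mem _ (hJ.1.nonCofinal_subset (notSupset_mem_Ikl h01)) _ ?_
  rintro a ⟨haP, haQ⟩
  exact ⟨haP, fun hsub => haQ (two_le_mTh_of_pair hθ2 hsub)⟩

lemma singleton_lt_lift_theta : (1 : Cardinal.{1}) < Cardinal.lift.{1} θ := by
  calc (1 : Cardinal.{1}) < 2 := one_lt_two
    _ = Cardinal.lift.{1} (2 : Cardinal.{0}) := by simp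
    _ ≤ Cardinal.lift.{1} θ := Cardinal.lift_le.2 hθ2

lemma efin_mem : ∀ (k : ℕ) (E : Set Ordinal.{0} → Set (Set Ordinal.{0})),
    (∀ c, E c ∈ J) →
    {a | a ∈ PSet κ lam.ord ∧ 2 ≤ mTh θ a ∧
      ∃ s : Finset Ordinal.{0}, ↑s ⊆ a ∩ Set.Iio δ ∧ s.card = k ∧ a ∈ E ↑s} ∈ J := by
  intro k
  induction k with
  | zero =>
    intro E hE
    refine hJ.1.subset_mem _ (hE ∅) _ ?_
    rintro a ⟨-, -, s, -, hcard, haE⟩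
    rw [Finset.card_eq_zero] at hcard
    subst hcard
    simpa using haE
  | succ k IH =>
    intro E hE
    set F : Set Ordinal.{0} → Set (Set Ordinal.{0}) := fun e =>
      if h : ∃ γ : Ordinal.{0}, e = {γ} then
        {a | a ∈ PSet κ lam.ord ∧ 2 ≤ mTh θ a ∧
          ∃ s : Finset Ordinal.{0}, ↑s ⊆ a ∩ Set.Iio δ ∧ s.card = k ∧
            a ∈ E (insert h.choose ↑s)} else ∅ with hFdef
    have hFJ : ∀ e ∈ PSet θ δ, F e ∈ J := by
      intro e _
      by_cases h : ∃ γ : Ordinal.{0}, e = {γ}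
      · have : F e = {a | a ∈ PSet κ lam.ord ∧ 2 ≤ mTh θ a ∧
          ∃ s : Finset Ordinal.{0}, ↑s ⊆ a ∩ Set.Iio δ ∧ s.card = k ∧
            a ∈ E (insert h.choose ↑s)} := by rw [hFdef]; simp only [dif_pos h]
        rw [this]
        exact IH (fun c => E (insert h.choose c)) (fun c => hE _)
      · have : F e = ∅ := by rw [hFdef]; simp only [dif_neg h]
        rw [this]
        exact hJ.1.nonCofinal_subset (empty_mem_Ikl hκ)
    have hmem : {a | a ∈ PSet κ lam.ord ∧ 2 ≤ mTh θ a ∧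
        ∃ s : Finset Ordinal.{0}, ↑s ⊆ a ∩ Set.Iio δ ∧ s.card = k + 1 ∧ a ∈ E ↑s} ∈
        nabla κ lam.ord θ δ J := by
      refine ⟨F, hFJ, ?_⟩
      rintro a ⟨haP, haQ, s, hs, hcard, haE⟩
      right
      have hspos : s.Nonempty := Finset.card_pos.1 (by omega)
      obtain ⟨γ, hγs⟩ := hspos
      have hγaδ : γ ∈ a ∩ Set.Iio δ := hs hγs
      set t := s.erase γ with ht
      have htcard : t.card = k := by
        rw [ht, Finset.card_erase_of_mem hγs, hcard]; rfl
      have hins : insert γ (↑t : Set Ordinal.{0}) = ↑s := by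
        rw [← Finset.coe_insert, Finset.insert_erase hγs]
      have heP : ({γ} : Set Ordinal.{0}) ∈ PSet θ δ := by
        refine ⟨by simpa using hγaδ.2, ?_⟩
        rw [Cardinal.mk_singleton]
        exact singleton_lt_lift_theta hκ hθ2 hθκ hdl hκδ hℵ hJ
      refine mem_iUnion₂.2 ⟨{γ}, heP, ?_, ?_⟩
      · have hex : ∃ γ' : Ordinal.{0}, ({γ} : Set Ordinal.{0}) = {γ'} := ⟨γ, rfl⟩
        have hch : hex.choose = γ := (Set.singleton_eq_singleton_iff.1 hex.choose_spec.symm)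
        have : F {γ} = {a | a ∈ PSet κ lam.ord ∧ 2 ≤ mTh θ a ∧
            ∃ s : Finset Ordinal.{0}, ↑s ⊆ a ∩ Set.Iio δ ∧ s.card = k ∧
              a ∈ E (insert hex.choose ↑s)} := by rw [hFdef]; simp only [dif_pos hex]
        rw [this, hch]
        refine ⟨haP, haQ, t, ?_, htcard, ?_⟩
        · refine subset_trans ?_ hs
          exact_mod_cast Finset.coe_subset.2 (Finset.erase_subset _ _)
        · rw [hins]; exact haE
      · refine ⟨by simpa using hγaδ, ?_⟩
        rw [Cardinal.mk_singleton]
        exact lt_of_lt_of_le one_lt_two haQ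
    rw [← hJ.2] at hmem
    exact hmem

lemma diag_mem (E : Set Ordinal.{0} → Set (Set Ordinal.{0})) (hE : ∀ c, E c ∈ J) :
    {a | a ∈ PSet κ lam.ord ∧ 2 ≤ mTh θ a ∧
      ∃ c : Set Ordinal.{0}, Good θ δ a c ∧ a ∈ E c} ∈ J := by
  have hZinf : {a | a ∈ PSet κ lam.ord ∧ 2 ≤ mTh θ a ∧ ℵ₀ ≤ mTh θ a ∧
      ∃ c : Set Ordinal.{0}, Good θ δ a c ∧ a ∈ E c} ∈ nabla κ lam.ord θ δ J := by
    refine ⟨E, fun e _ => hE e, ?_⟩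
    rintro a ⟨haP, haQ, hainf, c, hgood, haE⟩
    right
    have hcm : #↥c < mTh θ a := by
      have := hgood.2
      rwa [Cardinal.mul_eq_max le_rfl hainf, max_eq_right hainf] at this
    have hcP : c ∈ PSet θ δ :=
      ⟨hgood.1.trans inter_subset_right, lt_of_lt_of_le hcm (mTh_le_lift_theta a)⟩
    exact mem_iUnion₂.2 ⟨c, hcP, haE, hgood.1, hcm⟩
  rw [← hJ.2] at hZinf
  have hZfin : (⋃ k : ℕ, {a | a ∈ PSet κ lam.ord ∧ 2 ≤ mTh θ a ∧
      ∃ s : Finset Ordinal.{0}, ↑s ⊆ a ∩ Set.Iio δ ∧ s.card = k ∧ a ∈ E ↑s}) ∈ J :=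
    iUnion_nat_mem hκ hJ.1 hℵ (fun k => efin_mem hκ hθ2 hθκ hdl hκδ hℵ hJ k E hE)
  refine hJ.1.subset_mem _ (union2_mem hκ hJ.1 hZinf hZfin) _ ?_
  rintro a ⟨haP, haQ, c, hgood, haE⟩
  by_cases hinf : ℵ₀ ≤ mTh θ a
  · exact Or.inl ⟨haP, haQ, hinf, c, hgood, haE⟩
  · right
    push_neg at hinf
    have hcfin : c.Finite := by
      rw [← Cardinal.lt_aleph0_iff_set_finite]
      refine lt_of_lt_of_le hgood.2 ?_
      calc ℵ₀ * mTh θ a ≤ ℵ₀ * ℵ₀ := mul_le_mul_right (le_of_lt hinf) _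
        _ = ℵ₀ := Cardinal.aleph0_mul_aleph0
    obtain ⟨s, hs⟩ := hcfin.exists_finset_coe
    refine mem_iUnion.2 ⟨s.card, haP, haQ, s, ?_, rfl, ?_⟩
    · rw [hs]; exact hgood.1
    · rw [hs]; exact haE

lemma badn_mem : ∀ (n : ℕ) (g : List (Set Ordinal.{0}) → Set Ordinal.{0}),
    (∀ L, g L ∈ PSet κ lam.ord) →
    {a | a ∈ PSet κ lam.ord ∧ 2 ≤ mTh θ a ∧
      ∃ L : List (Set Ordinal.{0}), L.length = n ∧ (∀ c ∈ L, Good θ δ a c) ∧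
        ¬ g L ⊆ a} ∈ J := by
  intro n
  induction n with
  | zero =>
    intro g hg
    refine hJ.1.subset_mem _
      (hJ.1.nonCofinal_subset (notSupset_mem_Ikl (hg []))) _ ?_
    rintro a ⟨haP, -, L, hlen, -, hLg⟩
    rw [List.length_eq_zero_iff] at hlen
    subst hlen
    exact ⟨haP, hLg⟩
  | succ n IH =>
    intro g hg
    refine hJ.1.subset_mem _
      (diag_mem hκ hθ2 hθκ hdl hκδ hℵ hJ
        (fun c => {a | a ∈ PSet κ lam.ord ∧ 2 ≤ mTh θ a ∧
          ∃ L' : List (Set Ordinal.{0}), L'.length = n ∧ (∀ c' ∈ L', Good θ δ a c') ∧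
            ¬ g (c :: L') ⊆ a})
        (fun c => IH (fun L' => g (c :: L')) (fun L' => hg _))) _ ?_
    rintro a ⟨haP, haQ, L, hlen, hgood, hLg⟩
    match L with
    | c :: L' =>
      refine ⟨haP, haQ, c, hgood c List.mem_cons_self, ?_⟩
      refine ⟨haP, haQ, L', by simpa using hlen, ?_, hLg⟩
      exact fun c' hc' => hgood c' (List.mem_cons_of_mem c hc')

lemma S0_mem : {a | a ∈ PSet κ lam.ord ∧ a ∩ Set.Iio θ.ord = ∅} ∈ J := by
  have h0 : ({0} : Set Ordinal.{0}) ∈ PSet κ lam.ord :=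
    singleton_mem_PSet hκ (lt_of_lt_of_le Ordinal.omega0_pos (omega_le_l hκ hdl hκδ))
  refine hJ.1.subset_mem _ (hJ.1.nonCofinal_subset (notSupset_mem_Ikl h0)) _ ?_
  rintro a ⟨haP, hae⟩
  refine ⟨haP, fun hsub => ?_⟩
  have : (0 : Ordinal.{0}) ∈ a ∩ Set.Iio θ.ord :=
    ⟨hsub rfl, zero_lt_theta_ord hθ2⟩
  rw [hae] at this
  exact this

/-- Main smallness lemma: the complement of a club is in every normal ideal. -/
lemma compl_club_mem (g : List (Set Ordinal.{0}) → Set Ordinal.{0})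
    (hg : ∀ L, g L ∈ PSet κ lam.ord) :
    PSet κ lam.ord \ Club κ lam θ δ g ∈ J := by
  have hU : (⋃ n : ℕ, {a | a ∈ PSet κ lam.ord ∧ 2 ≤ mTh θ a ∧
      ∃ L : List (Set Ordinal.{0}), L.length = n ∧ (∀ c ∈ L, Good θ δ a c) ∧
        ¬ g L ⊆ a}) ∈ J :=
    iUnion_nat_mem hκ hJ.1 hℵ (fun n => badn_mem hκ hθ2 hθκ hdl hκδ hℵ hJ n g hg)
  refine hJ.1.subset_mem _
    (union2_mem hκ hJ.1 (union2_mem hκ hJ.1 (S0_mem hκ hθ2 hθκ hdl hκδ hℵ hJ)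
      (notQ_mem hκ hθ2 hθκ hdl hκδ hℵ hJ)) hU) _ ?_
  rintro a ⟨haP, haC⟩
  by_cases hae : a ∩ Set.Iio θ.ord = ∅
  · exact Or.inl (Or.inl ⟨haP, hae⟩)
  by_cases haQ : 2 ≤ mTh θ a
  · right
    have hane : (a ∩ Set.Iio θ.ord).Nonempty := nonempty_iff_ne_empty.2 hae
    have : ¬ ∀ L : List (Set Ordinal.{0}), (∀ c ∈ L, Good θ δ a c) → g L ⊆ a := by
      intro hall
      exact haC ⟨haP, hane, hall⟩
    push_neg at this
    obtain ⟨L, hLgood, hLg⟩ := this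
    exact mem_iUnion.2 ⟨L.length, haP, haQ, L, rfl, hLgood, hLg⟩
  · exact Or.inl (Or.inr ⟨haP, haQ⟩)

end ClubSmall

/-- The ideal of sets avoiding some club. -/
def ClubIdeal (κ lam θ : Cardinal.{0}) (δ : Ordinal.{0}) : Set (Set (Set Ordinal.{0})) :=
  {B | B ⊆ PSet κ lam.ord ∧ ∃ g : List (Set Ordinal.{0}) → Set Ordinal.{0},
    (∀ L, g L ∈ PSet κ lam.ord) ∧ B ∩ Club κ lam θ δ g = ∅}

section ClubIdealSec

variable (hκ : κ.IsRegular) (hkl : κ ≤ lam) (hθ2 : 2 ≤ θ) (hθκ : θ ≤ κ)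
  (hdl : δ ≤ lam.ord) (hκδ : κ.ord ≤ δ) (hℵ : ℵ₀ < κ)
  {J : Set (Set (Set Ordinal.{0}))} (hJ : IsNormalIdeal κ lam.ord θ δ J)

include hκ in
omit hkl in
lemma isRegular_lift : (Cardinal.lift.{1} κ).IsRegular := by
  constructor
  · simpa using Cardinal.lift_le.{1}.2 hκ.1
  · rw [← Cardinal.lift_ord.{1,0}, ← Ordinal.lift_cof.{0,1}]
    simpa using Cardinal.lift_le.{1}.2 hκ.2

lemma club_subset_P (g : List (Set Ordinal.{0}) → Set Ordinal.{0}) :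
    Club κ lam θ δ g ⊆ PSet κ lam.ord := fun a ha => ha.1

include hκ hθ2 hθκ hdl hκδ hℵ hJ
omit hkl

lemma club_pos {N : Set (Set (Set Ordinal.{0}))} {A : Set (Set Ordinal.{0})} (hN : IsNormalIdeal κ lam.ord θ δ N)
    (hA1 : A ⊆ PSet κ lam.ord) (hA2 : A ∉ N)
    (g : List (Set Ordinal.{0}) → Set Ordinal.{0}) (hg : ∀ L, g L ∈ PSet κ lam.ord)
    {y : Set Ordinal.{0}} (hy : y ∈ PSet κ lam.ord) :
    ∃ a, a ∈ A ∧ a ∈ Club κ lam θ δ g ∧ y ⊆ a := by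
  by_contra hcon
  push_neg at hcon
  refine hA2 (hN.1.subset_mem _
    (union2_mem hκ hN.1 (compl_club_mem hκ hθ2 hθκ hdl hκδ hℵ hN g hg)
      (hN.1.nonCofinal_subset (notSupset_mem_Ikl hy))) _ ?_)
  intro a ha
  by_cases hc : a ∈ Club κ lam θ δ g
  · exact Or.inr ⟨hA1 ha, hcon a ha hc⟩
  · exact Or.inl ⟨hA1 ha, hc⟩

lemma clubIdeal_isNormalIdeal : IsNormalIdeal κ lam.ord θ δ (ClubIdeal κ lam θ δ) := by
  have hregl := isRegular_lift hκ
  constructor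
  · constructor
    · exact fun B hB => hB.1
    · rintro B ⟨hB1, g, hgP, hBg⟩ C hCB
      exact ⟨hCB.trans hB1, g, hgP, eq_empty_of_subset_empty
        (hBg ▸ inter_subset_inter_left _ hCB)⟩
    · intro Y hY hYne hYcard
      -- choose a club function for each member of Y
      have hch : ∀ B : Set (Set Ordinal.{0}), ∃ g : List (Set Ordinal.{0}) → Set Ordinal.{0},
          (∀ L, g L ∈ PSet κ lam.ord) ∧ (B ∈ Y → B ∩ Club κ lam θ δ g = ∅) := by
        intro B
        by_cases hB : B ∈ Y
        · obtain ⟨-, g, hgP, hBg⟩ := hY hB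
          exact ⟨g, hgP, fun _ => hBg⟩
        · exact ⟨fun _ => ∅, fun _ => empty_mem_PSet hκ, fun h => absurd h hB⟩
      choose gsel hgsel1 hgsel2 using hch
      set g : List (Set Ordinal.{0}) → Set Ordinal.{0} :=
        fun L => ⋃ B : ↥Y, gsel ↑B L with hgdef
      have hgP : ∀ L, g L ∈ PSet κ lam.ord := by
        intro L
        constructor
        · rw [hgdef]
          exact iUnion_subset fun B => (hgsel1 ↑B L).1
        · rw [hgdef]
          refine lt_of_le_of_lt (Cardinal.mk_iUnion_le _) ?_
          refine Cardinal.mul_lt_of_lt hregl.1 hYcard ?_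
          exact Cardinal.iSup_lt_of_isRegular hregl hYcard fun B => (hgsel1 ↑B L).2
      refine ⟨?_, g, hgP, ?_⟩
      · exact sUnion_subset fun B hB => (hY hB).1
      · rw [eq_empty_iff_forall_notMem]
        rintro a ⟨haU, haC⟩
        obtain ⟨B, hBY, haB⟩ := haU
        have : a ∈ Club κ lam θ δ (gsel B) := by
          refine ⟨haC.1, haC.2.1, fun L hL => ?_⟩
          refine subset_trans ?_ (haC.2.2 L hL)
          rw [hgdef]
          exact subset_iUnion_of_subset ⟨B, hBY⟩ subset_rfl
        have h2 := hgsel2 B hBY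
        rw [eq_empty_iff_forall_notMem] at h2
        exact h2 a ⟨haB, this⟩
    · rintro B ⟨hB1, a₀, ha₀, hwit⟩
      refine ⟨hB1, fun _ => a₀, fun _ => ha₀, ?_⟩
      rw [eq_empty_iff_forall_notMem]
      rintro a ⟨haB, haC⟩
      exact hwit a haB (haC.2.2 [] (by simp))
    · rintro ⟨-, g, hgP, hPg⟩
      have hCne : (Club κ lam θ δ g).Nonempty := by
        by_contra hcon
        rw [not_nonempty_iff_eq_empty] at hcon
        have := compl_club_mem hκ hθ2 hθκ hdl hκδ hℵ hJ g hgP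
        rw [hcon, diff_empty] at this
        exact hJ.1.univ_not_mem this
      obtain ⟨a, ha⟩ := hCne
      rw [eq_empty_iff_forall_notMem] at hPg
      exact hPg a ⟨ha.1, ha⟩
  · -- normality
    apply Set.eq_of_subset_of_subset
    · -- ClubIdeal ⊆ nabla ClubIdeal
      rintro B hB
      refine ⟨fun _ => B, fun _ _ => hB, ?_⟩
      intro a haB
      by_cases hae : a ∩ Set.Iio θ.ord = ∅
      · exact Or.inl ⟨hB.1 haB, hae⟩
      · right
        have hane : (a ∩ Set.Iio θ.ord).Nonempty := nonempty_iff_ne_empty.2 hae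
        have heP : (∅ : Set Ordinal.{0}) ∈ PSet θ δ := by
          refine ⟨empty_subset _, ?_⟩
          rw [Cardinal.mk_emptyCollection]
          exact lt_of_lt_of_le zero_lt_one
            (le_of_lt (singleton_lt_lift_theta hκ hθ2 hθκ hdl hκδ hℵ hJ))
        refine mem_iUnion₂.2 ⟨∅, heP, haB, empty_subset _, ?_⟩
        rw [Cardinal.mk_emptyCollection]
        exact lt_of_lt_of_le zero_lt_one (one_le_mTh hane)
    · -- nabla ClubIdeal ⊆ ClubIdeal
      rintro B ⟨F, hF, hBsub⟩
      have hch : ∀ e : Set Ordinal.{0}, ∃ g : List (Set Ordinal.{0}) → Set Ordinal.{0},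
          (∀ L, g L ∈ PSet κ lam.ord) ∧ (e ∈ PSet θ δ → F e ∩ Club κ lam θ δ g = ∅) := by
        intro e
        by_cases he : e ∈ PSet θ δ
        · obtain ⟨-, g, hgP, hFg⟩ := hF e he
          exact ⟨g, hgP, fun _ => hFg⟩
        · exact ⟨fun _ => ∅, fun _ => empty_mem_PSet hκ, fun h => absurd h he⟩
      choose gsel hgsel1 hgsel2 using hch
      set g : List (Set Ordinal.{0}) → Set Ordinal.{0} := fun L =>
        match L with
        | [] => ∅
        | c :: L' => gsel c L' with hgdef
      have hgP : ∀ L, g L ∈ PSet κ lam.ord := by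
        intro L
        match L with
        | [] => exact empty_mem_PSet hκ
        | c :: L' => exact hgsel1 c L'
      have hBP : B ⊆ PSet κ lam.ord := by
        intro a haB
        rcases hBsub haB with h | h
        · exact h.1
        · obtain ⟨e, heP, haF, -⟩ := mem_iUnion₂.1 h
          exact (hF e heP).1 haF
      refine ⟨hBP, g, hgP, ?_⟩
      rw [eq_empty_iff_forall_notMem]
      rintro a ⟨haB, haC⟩
      rcases hBsub haB with h | h
      · exact haC.2.1.ne_empty h.2
      · obtain ⟨e, heP, haF, hinP⟩ := mem_iUnion₂.1 h
        have hclub : a ∈ Club κ lam θ δ (gsel e) := by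
          refine ⟨haC.1, haC.2.1, fun L hL => ?_⟩
          have hgoodL : ∀ c ∈ e :: L, Good θ δ a c := by
            intro c hc
            rcases List.mem_cons.1 hc with rfl | hc
            · refine ⟨hinP.1, lt_of_lt_of_le hinP.2 ?_⟩
              calc mTh θ a = 1 * mTh θ a := (one_mul _).symm
                _ ≤ ℵ₀ * mTh θ a := mul_le_mul_left (le_of_lt Cardinal.one_lt_aleph0) _
            · exact hL c hc
          have := haC.2.2 (e :: L) hgoodL
          exact this
        have h2 := hgsel2 e heP
        rw [eq_empty_iff_forall_notMem] at h2
        exact h2 a ⟨haF, hclub⟩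

end ClubIdealSec
end Proofs


noncomputable section Proofs2
open Classical
set_option linter.unusedSectionVars false

variable {κ lam θ : Cardinal.{0}} {δ : Ordinal.{0}}

lemma thetaBar_cases {κ θ : Cardinal.{0}} (hθκ : θ ≤ κ) (hℵ : ℵ₀ < κ) :
    (thetaBar κ θ = θ ∧ (θ < κ ∨ Order.IsSuccLimit κ)) ∨
    (∃ ν : Cardinal.{0}, κ = Order.succ ν ∧ θ = κ ∧ thetaBar κ θ = ν ∧ ℵ₀ ≤ ν) := by
  by_cases h : θ < κ ∨ Order.IsSuccLimit κ
  · exact Or.inl ⟨by rw [thetaBar, if_pos h], h⟩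
  · right
    push_neg at h
    obtain ⟨h1, h2⟩ := h
    have hθeq : θ = κ := le_antisymm hθκ h1
    rw [Order.isSuccLimit_iff] at h2
    push_neg at h2
    have hne : κ ≠ ⊥ := by
      intro hb
      rw [hb] at hℵ
      exact absurd (lt_of_le_of_lt zero_le hℵ) (lt_irrefl _)
    obtain ⟨ν, hν⟩ := Order.not_isSuccPrelimit_iff.1 (h2 (isMin_iff_eq_bot.not.2 hne))
    have hsucc : Order.succ ν = κ := hν.succ_eq
    refine ⟨ν, hsucc.symm, hθeq, ?_, ?_⟩
    · have hset : {ν' : Cardinal.{0} | Order.succ ν' = κ} = {ν} := by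
        ext ν'
        simp only [Set.mem_setOf_eq, Set.mem_singleton_iff]
        constructor
        · intro hh
          have := hh.trans hsucc.symm
          exact (Order.succ_eq_succ_iff_of_not_isMax (not_isMax ν') (not_isMax ν)).1 this
        · rintro rfl; exact hsucc
      rw [thetaBar, if_neg (by push_neg; exact ⟨h1, by
        rw [Order.isSuccLimit_iff]; push_neg; intro _; exact h2 (isMin_iff_eq_bot.not.2 hne)⟩), hset]
      exact csSup_singleton ν
    · by_contra hcon
      push_neg at hcon
      have : Order.succ ν ≤ ℵ₀ := Order.succ_le_of_lt hcon
      rw [hsucc] at this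
      exact absurd hℵ (not_lt.2 this)


section TauFacts

variable (hκ : κ.IsRegular) (hθ2 : 2 ≤ θ) (hθκ : θ ≤ κ) (hℵ : ℵ₀ < κ)

include hθ2 hθκ hℵ in
lemma aleph0_le_tau : ℵ₀ ≤ thetaBar κ θ * ℵ₀ := by
  have h1 : 1 ≤ thetaBar κ θ := by
    rcases thetaBar_cases hθκ hℵ with ⟨htb, -⟩ | ⟨ν, -, -, htb, hν⟩
    · rw [htb]; exact le_trans one_le_two hθ2
    · rw [htb]; exact le_trans (by simp) hν
  calc ℵ₀ = 1 * ℵ₀ := (one_mul _).symm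
    _ ≤ thetaBar κ θ * ℵ₀ := mul_le_mul_left h1 _

include hκ hθ2 hθκ hℵ in
lemma tau_le_kappa : thetaBar κ θ * ℵ₀ ≤ κ := by
  have h1 : thetaBar κ θ ≤ κ := by
    rcases thetaBar_cases hθκ hℵ with ⟨htb, -⟩ | ⟨ν, hκν, -, htb, -⟩
    · rw [htb]; exact hθκ
    · rw [htb, hκν]; exact le_of_lt (Order.lt_succ ν)
  calc thetaBar κ θ * ℵ₀ ≤ κ * κ := mul_le_mul' h1 (le_of_lt hℵ)
    _ = κ := Cardinal.mul_eq_self hℵ.le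

include hκ hθ2 hθκ hℵ in
lemma mul_mTh_le_tau {a : Set Ordinal.{0}} (ha : a ∈ PSet κ lam.ord) :
    ℵ₀ * mTh θ a ≤ Cardinal.lift.{1} (thetaBar κ θ * ℵ₀) := by
  rcases thetaBar_cases hθκ hℵ with ⟨htb, hor⟩ | ⟨ν, hκν, hθκ', htb, hν⟩
  · by_cases hθlt : θ < κ
    · calc ℵ₀ * mTh θ a ≤ ℵ₀ * Cardinal.lift.{1} θ := mul_le_mul_right (mTh_le_lift_theta a) _
        _ = Cardinal.lift.{1} (thetaBar κ θ * ℵ₀) := by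
          rw [htb, Cardinal.lift_mul, Cardinal.lift_aleph0, mul_comm]
    · have hθeq : θ = κ := le_antisymm hθκ (not_lt.1 hθlt)
      have hlt : ℵ₀ * mTh θ a < Cardinal.lift.{1} κ := by
        refine Cardinal.mul_lt_of_lt (aleph0_le_liftκ hκ) ?_ ?_
        · calc (ℵ₀ : Cardinal.{1}) = Cardinal.lift.{1} ℵ₀ := by simp
            _ < Cardinal.lift.{1} κ := Cardinal.lift_lt.2 hℵ
        · exact lt_of_le_of_lt (mTh_le_mk a) ha.2
      refine le_trans (le_of_lt hlt) ?_
      refine Cardinal.lift_le.2 ?_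
      rw [htb, hθeq]
      calc κ = κ * 1 := (mul_one κ).symm
        _ ≤ κ * ℵ₀ := mul_le_mul_right (by simp) _
  · have hamk : #↥a ≤ Cardinal.lift.{1} ν := by
      have := ha.2
      rw [hκν, Cardinal.lift_succ, Order.lt_succ_iff] at this
      exact this
    calc ℵ₀ * mTh θ a ≤ ℵ₀ * Cardinal.lift.{1} ν :=
        mul_le_mul_right (le_trans (mTh_le_mk a) hamk) _
      _ = Cardinal.lift.{1} (thetaBar κ θ * ℵ₀) := by
        rw [htb, Cardinal.lift_mul, Cardinal.lift_aleph0, mul_comm]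

include hκ hθ2 hθκ hℵ in
lemma exists_sigma {ρ : Cardinal.{0}} (hρ : ρ < thetaBar κ θ * ℵ₀) :
    ∃ σ : Cardinal.{0}, 1 ≤ σ ∧ σ ≤ θ ∧ σ < κ ∧ ρ < ℵ₀ * σ := by
  by_cases hsm : ρ < ℵ₀
  · refine ⟨1, le_refl _, le_trans one_le_two hθ2, lt_of_lt_of_le one_lt_two
      (le_trans hθ2 hθκ), ?_⟩
    rwa [mul_one]
  push_neg at hsm
  have htbinf : ℵ₀ ≤ thetaBar κ θ := by
    by_contra hcon
    push_neg at hcon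
    have : thetaBar κ θ * ℵ₀ ≤ ℵ₀ := by
      calc thetaBar κ θ * ℵ₀ ≤ ℵ₀ * ℵ₀ := mul_le_mul_left (le_of_lt hcon) _
        _ = ℵ₀ := Cardinal.aleph0_mul_aleph0
    exact absurd (lt_of_lt_of_le hρ this) (not_lt.2 hsm)
  have hτ : thetaBar κ θ * ℵ₀ = thetaBar κ θ :=
    Cardinal.mul_eq_left htbinf (le_trans (by simp) htbinf) (by simp [Cardinal.aleph0_ne_zero])
  rw [hτ] at hρ
  refine ⟨Order.succ ρ, le_trans (le_of_lt (lt_of_lt_of_le one_lt_aleph0 hsm))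
    (le_of_lt (Order.lt_succ ρ)), ?_, ?_, ?_⟩
  · -- succ ρ ≤ θ
    have h1 : Order.succ ρ ≤ thetaBar κ θ := Order.succ_le_of_lt hρ
    rcases thetaBar_cases hθκ hℵ with ⟨htb, -⟩ | ⟨ν, hκν, hθκ', htb, -⟩
    · rwa [htb] at h1
    · rw [htb] at h1
      rw [hθκ', hκν]
      exact le_trans h1 (le_of_lt (Order.lt_succ ν))
  · -- succ ρ < κ
    rcases thetaBar_cases hθκ hℵ with ⟨htb, hor⟩ | ⟨ν, hκν, hθκ', htb, -⟩
    · rcases hor with hθlt | hlim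
      · exact lt_of_le_of_lt (Order.succ_le_of_lt (htb ▸ hρ)) hθlt
      · exact hlim.succ_lt (lt_of_lt_of_le (htb ▸ hρ) hθκ)
    · rw [hκν]
      have : Order.succ ρ ≤ ν := Order.succ_le_of_lt (htb ▸ hρ)
      exact lt_of_le_of_lt this (Order.lt_succ ν)
  · calc ρ < Order.succ ρ := Order.lt_succ ρ
      _ = 1 * Order.succ ρ := (one_mul _).symm
      _ ≤ ℵ₀ * Order.succ ρ := mul_le_mul_left (by simp) _

end TauFacts

section Plumbing

variable (hκ : κ.IsRegular) (hkl : κ ≤ lam) (hθ2 : 2 ≤ θ) (hθκ : θ ≤ κ)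
  (hdl : δ ≤ lam.ord) (hκδ : κ.ord ≤ δ) (hℵ : ℵ₀ < κ)

include hκ hθ2 hθκ hℵ in
lemma good_lt_tau {a c : Set Ordinal.{0}} (ha : a ∈ PSet κ lam.ord)
    (hg : Good θ δ a c) : #↥c < Cardinal.lift.{1} (thetaBar κ θ * ℵ₀) :=
  lt_of_lt_of_le hg.2 (mul_mTh_le_tau hκ hθ2 hθκ hℵ ha)

include hκ hθ2 hθκ hdl hκδ hℵ in
lemma exists_wit (x : Set Ordinal.{0}) :
    ∃ w : Set Ordinal.{0}, w ⊆ Set.Iio θ.ord ∧ w ∈ PSet κ lam.ord ∧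
      (#↥x < Cardinal.lift.{1} (thetaBar κ θ * ℵ₀) → ∀ b : Set Ordinal.{0}, w ⊆ b →
        #↥x < ℵ₀ * mTh θ b) := by
  by_cases hx : #↥x < Cardinal.lift.{1} (thetaBar κ θ * ℵ₀)
  · obtain ⟨ρ, hρ⟩ := Cardinal.mem_range_lift_of_le (le_of_lt hx)
    have hρτ : ρ < thetaBar κ θ * ℵ₀ := by
      rw [← Cardinal.lift_lt.{0,1}, hρ]
      exact hx
    obtain ⟨σ, hσ1, hσθ, hσκ, hρσ⟩ := exists_sigma hκ hθ2 hθκ hℵ hρτ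
    have hsub : Cardinal.lift.{1} σ ≤ #↥(Set.Iio θ.ord) := by
      rw [Ordinal.mk_Iio_ordinal, Cardinal.card_ord]
      exact Cardinal.lift_le.2 hσθ
    obtain ⟨w, hw1, hw2⟩ := Cardinal.le_mk_iff_exists_subset.1 hsub
    have hθl : Set.Iio θ.ord ⊆ Set.Iio lam.ord := fun z hz =>
      lt_of_lt_of_le hz (le_trans (theta_ord_le_delta hκ hθκ hκδ) hdl)
    refine ⟨w, hw1, ⟨subset_trans hw1 hθl, ?_⟩, fun _ b hb => ?_⟩
    · rw [hw2]
      exact Cardinal.lift_lt.2 hσκ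
    · have hwb : Cardinal.lift.{1} σ ≤ mTh θ b := by
        rw [← hw2]
        exact Cardinal.mk_le_mk_of_subset (subset_inter hb hw1)
      calc #↥x = Cardinal.lift.{1} ρ := hρ.symm
        _ < Cardinal.lift.{1} (ℵ₀ * σ) := Cardinal.lift_lt.2 hρσ
        _ = ℵ₀ * Cardinal.lift.{1} σ := by rw [Cardinal.lift_mul, Cardinal.lift_aleph0]
        _ ≤ ℵ₀ * mTh θ b := mul_le_mul_right hwb _
  · exact ⟨∅, empty_subset _, empty_mem_PSet hκ, fun h => absurd h hx⟩

/-- Transfer a cofinal family in `P_ρ(δ.card.ord)` to subsets of `Iio δ`. -/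
lemma exists_Xprime (ρ : Cardinal.{0}) :
    ∃ X' : Set (Set Ordinal.{0}),
      (∀ x ∈ X', x ⊆ Set.Iio δ ∧ #↥x < Cardinal.lift.{1} ρ) ∧
      (∀ c : Set Ordinal.{0}, c ⊆ Set.Iio δ → #↥c < Cardinal.lift.{1} ρ →
        ∃ x ∈ X', c ⊆ x) ∧
      #↥X' = uNum ρ δ.card := by
  have hne : {c | ∃ X ⊆ PSet ρ δ.card.ord, #↥X = c ∧
      ∀ e ∈ PSet ρ δ.card.ord, ∃ x ∈ X, e ⊆ x}.Nonempty :=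
    ⟨#↥(PSet ρ δ.card.ord), PSet ρ δ.card.ord, subset_rfl, rfl,
      fun e he => ⟨e, he, subset_rfl⟩⟩
  obtain ⟨X, hX1, hX2, hX3⟩ := csInf_mem hne
  have hQex : Nonempty (↥(Set.Iio δ) ≃ ↥(Set.Iio δ.card.ord)) := by
    rw [← Cardinal.eq, Ordinal.mk_Iio_ordinal, Ordinal.mk_Iio_ordinal, Cardinal.card_ord]
  obtain ⟨Q⟩ := hQex
  set pull : Set Ordinal.{0} → Set Ordinal.{0} := fun x =>
    {β | ∃ hβ : β ∈ Set.Iio δ, ↑(Q ⟨β, hβ⟩) ∈ x} with hpull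
  set push : Set Ordinal.{0} → Set Ordinal.{0} := fun c =>
    {α | ∃ hα : α ∈ Set.Iio δ.card.ord, ↑(Q.symm ⟨α, hα⟩) ∈ c} with hpush
  have hpull_mk : ∀ x : Set Ordinal.{0}, #↥(pull x) ≤ #↥x := by
    intro x
    refine Cardinal.mk_le_of_injective (f := fun b : ↥(pull x) =>
      (⟨↑(Q ⟨↑b, b.2.choose⟩), b.2.choose_spec⟩ : ↥x)) ?_
    rintro ⟨b1, hb1⟩ ⟨b2, hb2⟩ heq
    simp only [Subtype.mk_eq_mk] at heq
    have := Q.injective (Subtype.ext heq)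
    simp only [Subtype.mk_eq_mk] at this
    exact Subtype.ext this
  have hpush_mk : ∀ c : Set Ordinal.{0}, #↥(push c) ≤ #↥c := by
    intro c
    refine Cardinal.mk_le_of_injective (f := fun b : ↥(push c) =>
      (⟨↑(Q.symm ⟨↑b, b.2.choose⟩), b.2.choose_spec⟩ : ↥c)) ?_
    rintro ⟨b1, hb1⟩ ⟨b2, hb2⟩ heq
    simp only [Subtype.mk_eq_mk] at heq
    have := Q.symm.injective (Subtype.ext heq)
    simp only [Subtype.mk_eq_mk] at this
    exact Subtype.ext this
  refine ⟨pull '' X, ?_, ?_, ?_⟩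
  · rintro x' ⟨x, hxX, rfl⟩
    exact ⟨fun β hβ => hβ.choose, lt_of_le_of_lt (hpull_mk x) (hX1 hxX).2⟩
  · intro c hc1 hc2
    have hpc : push c ∈ PSet ρ δ.card.ord :=
      ⟨fun α hα => hα.choose, lt_of_le_of_lt (hpush_mk c) hc2⟩
    obtain ⟨x, hxX, hsub⟩ := hX3 (push c) hpc
    refine ⟨pull x, Set.mem_image_of_mem _ hxX, ?_⟩
    intro β hβc
    have hβ : β ∈ Set.Iio δ := hc1 hβc
    have hα : (↑(Q ⟨β, hβ⟩) : Ordinal.{0}) ∈ push c := by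
      refine ⟨(Q ⟨β, hβ⟩).2, ?_⟩
      have : (⟨↑(Q ⟨β, hβ⟩), (Q ⟨β, hβ⟩).2⟩ : ↥(Set.Iio δ.card.ord)) = Q ⟨β, hβ⟩ :=
        Subtype.ext rfl
      rw [this, Equiv.symm_apply_apply]
      exact hβc
    exact ⟨hβ, hsub hα⟩
  · rw [uNum, ← hX2]
    refine Cardinal.mk_image_eq_of_injOn _ _ ?_
    intro x1 hx1 x2 hx2 heq
    have hdir : ∀ x1 ∈ X, ∀ x2 ∈ X, pull x1 = pull x2 → x1 ⊆ x2 := by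
      intro x1 hx1 x2 hx2 heq α hαx1
      have hα : α ∈ Set.Iio δ.card.ord := (hX1 hx1).1 hαx1
      have h1 : (↑(Q.symm ⟨α, hα⟩) : Ordinal.{0}) ∈ pull x1 := by
        refine ⟨(Q.symm ⟨α, hα⟩).2, ?_⟩
        have h0 : (⟨↑(Q.symm ⟨α, hα⟩), (Q.symm ⟨α, hα⟩).2⟩ : ↥(Set.Iio δ)) =
            Q.symm ⟨α, hα⟩ := Subtype.ext rfl
        rw [h0, Equiv.apply_symm_apply]
        exact hαx1
      rw [heq] at h1
      obtain ⟨hβ, hmem⟩ := h1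
      have h2 : Q ⟨↑(Q.symm ⟨α, hα⟩), hβ⟩ = ⟨α, hα⟩ := by
        have h0 : (⟨↑(Q.symm ⟨α, hα⟩), hβ⟩ : ↥(Set.Iio δ)) = Q.symm ⟨α, hα⟩ :=
          Subtype.ext rfl
        rw [h0, Equiv.apply_symm_apply]
      rw [h2] at hmem
      exact hmem
    exact Set.Subset.antisymm (hdir x1 hx1 x2 hx2 heq) (hdir x2 hx2 x1 hx1 heq.symm)

include hκ hκδ in
lemma Xprime_infinite (ρ : Cardinal.{0}) (hρκ : ρ ≤ κ) (hρinf : ℵ₀ ≤ ρ)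
    {X' : Set (Set Ordinal.{0})}
    (h1 : ∀ x ∈ X', x ⊆ Set.Iio δ ∧ #↥x < Cardinal.lift.{1} ρ)
    (h2 : ∀ c : Set Ordinal.{0}, c ⊆ Set.Iio δ → #↥c < Cardinal.lift.{1} ρ →
      ∃ x ∈ X', c ⊆ x) : ℵ₀ ≤ #↥X' := by
  by_contra hcon
  push_neg at hcon
  have hregl := isRegular_lift hκ
  have hcover : Set.Iio δ ⊆ ⋃₀ X' := by
    intro β hβ
    have hs : ({β} : Set Ordinal.{0}) ⊆ Set.Iio δ := by simpa using hβ
    have hc : #↥({β} : Set Ordinal.{0}) < Cardinal.lift.{1} ρ := by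
      rw [Cardinal.mk_singleton]
      calc (1 : Cardinal.{1}) < ℵ₀ := Cardinal.one_lt_aleph0
        _ = Cardinal.lift.{1} ℵ₀ := by simp
        _ ≤ Cardinal.lift.{1} ρ := Cardinal.lift_le.2 hρinf
    obtain ⟨x, hxX, hsub⟩ := h2 {β} hs hc
    exact ⟨x, hxX, hsub rfl⟩
  have hbig : Cardinal.lift.{1} δ.card ≤ #↥(⋃₀ X') := by
    rw [← Ordinal.mk_Iio_ordinal]
    exact Cardinal.mk_le_mk_of_subset hcover
  have hsmall : #↥(⋃₀ X') < Cardinal.lift.{1} κ := by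
    refine lt_of_le_of_lt (Cardinal.mk_sUnion_le X') ?_
    have hX'κ : #↥X' < Cardinal.lift.{1} κ :=
      lt_of_lt_of_le hcon (aleph0_le_liftκ hκ)
    refine Cardinal.mul_lt_of_lt hregl.1 hX'κ ?_
    refine Cardinal.iSup_lt_of_isRegular hregl hX'κ ?_
    intro x
    exact lt_of_lt_of_le (h1 ↑x x.2).2 (Cardinal.lift_le.2 hρκ)
  have hκδc : κ ≤ δ.card := by
    have := Ordinal.card_le_card hκδ
    rwa [Cardinal.card_ord] at this
  exact absurd (lt_of_le_of_lt (le_trans (Cardinal.lift_le.2 hκδc) hbig) hsmall)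
    (lt_irrefl _)

end Plumbing
end Proofs2


set_option maxHeartbeats 1000000

/-- Assume `δ ≥ κ` and there exists a `[δ]^{<θ}`-normal ideal on `P_κ(λ)`.
Then for every `A ∈ (NS^{[δ]^{<θ}}_{κ,λ})⁺`,
`cof(NS^{[δ]^{<θ}}_{κ,λ} | A) = 𝔡^{u(θ̄·ℵ₀, |δ|)}_{κ,λ}`. -/
theorem stmt1 (κ lam θ : Cardinal.{0}) (δ : Ordinal.{0})
    (hκ : κ.IsRegular) (hkl : κ ≤ lam) (hθ2 : 2 ≤ θ) (hθκ : θ ≤ κ)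
    (hδ1 : 1 ≤ δ) (hdl : δ ≤ lam.ord) (hκδ : κ.ord ≤ δ)
    (hex : ∃ J, IsNormalIdeal κ lam.ord θ δ J) :
    ∀ N, IsLeastNormalIdeal κ lam.ord θ δ N →
      ∀ A ∈ plus κ lam.ord N,
        cofIdeal (restrict κ lam.ord N A) =
          dNum κ lam.ord (uNum (thetaBar κ θ * ℵ₀) δ.card) := by
  classical
  obtain ⟨J, hJ⟩ := hex
  have hℵ : ℵ₀ < κ := aleph0_lt_kappa hκ hθ2 hθκ hdl hκδ hJ
  intro N hN A hA
  obtain ⟨hAP, hAN⟩ := hA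
  have hNid : IsNormalIdeal κ lam.ord θ δ N := hN.1
  have hNC : N ⊆ ClubIdeal κ lam θ δ :=
    hN.2 _ (clubIdeal_isNormalIdeal hκ hθ2 hθκ hdl hκδ hℵ hJ)
  set τ : Cardinal.{0} := thetaBar κ θ * ℵ₀ with hτdef
  set u : Cardinal.{1} := uNum τ δ.card with hudef
  have hτκ : τ ≤ κ := tau_le_kappa hκ hθ2 hθκ hℵ
  have hτinf : ℵ₀ ≤ τ := aleph0_le_tau hθ2 hθκ hℵ
  obtain ⟨X', hX'1, hX'2, hX'3⟩ := exists_Xprime (δ := δ) τ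
  have hX'inf : ℵ₀ ≤ #↥X' := Xprime_infinite hκ hκδ τ hτκ hτinf hX'1 hX'2
  haveI hinst : Infinite ↥X' := by
    rw [Cardinal.infinite_iff]
    exact hX'inf
  have hX'P : ∀ x : ↥X', (↑x : Set Ordinal.{0}) ∈ PSet κ lam.ord := by
    intro x
    refine ⟨subset_trans (hX'1 ↑x x.2).1 (fun z hz => lt_of_lt_of_le hz hdl), ?_⟩
    exact lt_of_lt_of_le (hX'1 ↑x x.2).2 (Cardinal.lift_le.2 hτκ)
  -- the enumeration of lists over X' by u.ord.toType
  have hψex : Nonempty (u.ord.ToType ≃ List ↥X') := by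
    rw [← Cardinal.eq, Cardinal.mk_list_eq_mk, hX'3, Cardinal.mk_toType, Cardinal.card_ord]
  obtain ⟨ψ⟩ := hψex
  -- witnesses
  have hwitex := fun x => exists_wit (lam := lam) hκ hθ2 hθκ hdl hκδ hℵ x
  choose wit hwit1 hwit2 hwit3 using hwitex
  -- cover function
  have hcovex : ∀ c : Set Ordinal.{0}, ∃ x : ↥X',
      (c ⊆ Set.Iio δ → #↥c < Cardinal.lift.{1} τ → c ⊆ ↑x) ∧ (c ∈ X' → ↑x = c) := by
    intro c
    by_cases hc : c ∈ X'
    · exact ⟨⟨c, hc⟩, fun _ _ => subset_rfl, fun _ => rfl⟩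
    · by_cases h2 : c ⊆ Set.Iio δ ∧ #↥c < Cardinal.lift.{1} τ
      · obtain ⟨x, hx, hsub⟩ := hX'2 c h2.1 h2.2
        exact ⟨⟨x, hx⟩, fun _ _ => hsub, fun h => absurd h hc⟩
      · refine ⟨Classical.arbitrary _, fun ha hb => absurd ⟨ha, hb⟩ h2,
          fun h => absurd h hc⟩
  choose cover hcover1 hcover2 using hcovex
  have hcov_val : ∀ M : List ↥X', (M.map Subtype.val).map cover = M := by
    intro M
    induction M with
    | nil => rfl
    | cons x M ih =>
      have h1 : cover ↑x = x := Subtype.ext (hcover2 ↑x x.2)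
      simp only [List.map_cons, ih, h1]
  -- yW
  set yW : List ↥X' → Set Ordinal.{0} :=
    fun M => M.foldr (fun x s => ((↑x : Set Ordinal.{0}) ∪ wit ↑x) ∪ s) ∅ with hyWdef
  have hyW_P : ∀ M, yW M ∈ PSet κ lam.ord := by
    intro M
    induction M with
    | nil => exact empty_mem_PSet hκ
    | cons x M ih =>
      exact union_mem_PSet hκ (union_mem_PSet hκ (hX'P x) (hwit2 ↑x)) ih
  have hyW_mem : ∀ (M : List ↥X'), ∀ x ∈ M, ((↑x : Set Ordinal.{0}) ∪ wit ↑x) ⊆ yW M := by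
    intro M
    induction M with
    | nil => intro x hx; exact absurd hx List.not_mem_nil
    | cons z M ih =>
      intro x hx
      rcases List.mem_cons.1 hx with rfl | hx
      · exact subset_union_left
      · exact subset_trans (ih x hx) subset_union_right
  -- gOf
  set gOf : (u.ord.ToType → Set Ordinal.{0}) → List (Set Ordinal.{0}) → Set Ordinal.{0} :=
    fun f L => if (∀ c ∈ L, c ⊆ Set.Iio δ ∧ #↥c < Cardinal.lift.{1} τ) then
      f (ψ.symm (L.map cover)) else ∅ with hgOfdef
  have hgOf_P : ∀ f : u.ord.ToType → Set Ordinal.{0}, (∀ i, f i ∈ PSet κ lam.ord) →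
      ∀ L, gOf f L ∈ PSet κ lam.ord := by
    intro f hf L
    simp only [hgOfdef]
    by_cases hc : (∀ c ∈ L, c ⊆ Set.Iio δ ∧ #↥c < Cardinal.lift.{1} τ)
    · rw [if_pos hc]; exact hf _
    · rw [if_neg hc]; exact empty_mem_PSet hκ
  -- goodness of val-lists of X'-lists inside points containing yW
  have hvalGood : ∀ (M : List ↥X') (a : Set Ordinal.{0}), yW M ⊆ a →
      ∀ c ∈ M.map Subtype.val, Good θ δ a c := by
    intro M a hya c hc
    obtain ⟨x, hxM, rfl⟩ := List.mem_map.1 hc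
    have hxy : ((↑x : Set Ordinal.{0}) ∪ wit ↑x) ⊆ a := (hyW_mem M x hxM).trans hya
    constructor
    · exact subset_inter (subset_trans subset_union_left hxy) (hX'1 ↑x x.2).1
    · exact hwit3 ↑x (hX'1 ↑x x.2).2 a (subset_trans subset_union_right hxy)
  have hvalCond : ∀ (M : List ↥X'), ∀ c ∈ M.map Subtype.val,
      c ⊆ Set.Iio δ ∧ #↥c < Cardinal.lift.{1} τ := by
    intro M c hc
    obtain ⟨x, hxM, rfl⟩ := List.mem_map.1 hc
    exact hX'1 ↑x x.2
  refine le_antisymm ?_ ?_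
  · -- cofIdeal ≤ dNum
    have hdne : {c | ∃ F : Set (u.ord.ToType → Set Ordinal.{0}),
        #↥F = c ∧ (∀ f ∈ F, ∀ i, f i ∈ PSet κ lam.ord) ∧
        ∀ g : u.ord.ToType → Set Ordinal.{0}, (∀ i, g i ∈ PSet κ lam.ord) →
          ∃ f ∈ F, ∀ i, g i ⊆ f i}.Nonempty :=
      ⟨_, {f | ∀ i, f i ∈ PSet κ lam.ord}, rfl, fun f hf => hf,
        fun g hg => ⟨g, hg, fun i => subset_rfl⟩⟩
    obtain ⟨F, hF1, hF2, hF3⟩ := csInf_mem hdne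
    set Sgen : Set (Set (Set Ordinal.{0})) :=
      (fun f => PSet κ lam.ord \ (A ∩ Club κ lam θ δ (gOf f))) '' F with hSgen
    have hSsub : Sgen ⊆ restrict κ lam.ord N A := by
      rintro B ⟨f, hfF, rfl⟩
      refine ⟨diff_subset, ?_⟩
      refine hNid.1.subset_mem _
        (compl_club_mem hκ hθ2 hθκ hdl hκδ hℵ hNid (gOf f) (hgOf_P f (hF2 f hfF))) _ ?_
      rintro x ⟨⟨hxP, hxnot⟩, hxA⟩
      exact ⟨hxP, fun hxC => hxnot ⟨hxA, hxC⟩⟩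
    have hScov : ∀ B ∈ restrict κ lam.ord N A, ∃ C ∈ Sgen, B ⊆ C := by
      rintro B ⟨hBP, hBA⟩
      obtain ⟨-, g, hgP, hBAC⟩ := hNC hBA
      have hptex : ∀ i : u.ord.ToType, ∃ a, a ∈ PSet κ lam.ord ∧
          a ∈ Club κ lam θ δ g ∧ yW (ψ i) ⊆ a :=
        fun i => club_pos hκ hθ2 hθκ hdl hκδ hℵ hJ hNid subset_rfl
          hNid.1.univ_not_mem g hgP (hyW_P (ψ i))
      choose pt hpt1 hpt2 hpt3 using hptex
      obtain ⟨f, hfF, hfdom⟩ := hF3 pt hpt1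
      refine ⟨_, ⟨f, hfF, rfl⟩, ?_⟩
      intro a haB
      refine ⟨hBP haB, ?_⟩
      rintro ⟨haA, haC⟩
      have haCg : a ∈ Club κ lam θ δ g := by
        refine ⟨haC.1, haC.2.1, fun L hL => ?_⟩
        have hLc : ∀ c ∈ L, c ⊆ Set.Iio δ ∧ #↥c < Cardinal.lift.{1} τ := fun c hc =>
          ⟨(hL c hc).1.trans inter_subset_right,
            good_lt_tau hκ hθ2 hθκ hℵ haC.1 (hL c hc)⟩
        set M : List ↥X' := L.map cover with hM
        set i := ψ.symm M with hi
        have hψi : ψ i = M := Equiv.apply_symm_apply ψ M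
        have hLgood_pt : ∀ c ∈ L, Good θ δ (pt i) c := by
          intro c hc
          have hcovc : cover c ∈ M := by rw [hM]; exact List.mem_map_of_mem (f := cover) hc
          have hxy : ((↑(cover c) : Set Ordinal.{0}) ∪ wit ↑(cover c)) ⊆ pt i := by
            refine subset_trans ?_ (hpt3 i)
            rw [hψi]
            exact hyW_mem M _ hcovc
          have hcsub : c ⊆ ↑(cover c) := hcover1 c (hLc c hc).1 (hLc c hc).2
          constructor
          · exact subset_inter (hcsub.trans (subset_trans subset_union_left hxy))
              (hLc c hc).1
          · refine lt_of_le_of_lt (Cardinal.mk_le_mk_of_subset hcsub) ?_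
            exact hwit3 ↑(cover c) (hX'1 _ (cover c).2).2 (pt i)
              (subset_trans subset_union_right hxy)
        have hgsub : g L ⊆ pt i := (hpt2 i).2.2 L hLgood_pt
        have hfeq : gOf f L = f i := by
          simp only [hgOfdef]
          rw [if_pos hLc]
        have hfa : f i ⊆ a := by
          rw [← hfeq]
          exact haC.2.2 L hL
        exact (hgsub.trans (hfdom i)).trans hfa
      have : a ∈ (B ∩ A) ∩ Club κ lam θ δ g := ⟨⟨haB, haA⟩, haCg⟩
      rw [hBAC] at this
      exact this
    calc cofIdeal (restrict κ lam.ord N A) ≤ #↥Sgen :=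
        csInf_le (OrderBot.bddBelow _) ⟨Sgen, hSsub, rfl, hScov⟩
      _ ≤ #↥F := Cardinal.mk_image_le
      _ = dNum κ lam.ord u := hF1
  · -- dNum ≤ cofIdeal
    have hcne : {c | ∃ S ⊆ restrict κ lam.ord N A, #↥S = c ∧
        ∀ B ∈ restrict κ lam.ord N A, ∃ C ∈ S, B ⊆ C}.Nonempty :=
      ⟨_, restrict κ lam.ord N A, subset_rfl, rfl, fun B hB => ⟨B, hB, subset_rfl⟩⟩
    obtain ⟨S, hS1, hS2, hS3⟩ := csInf_mem hcne
    have hgBex : ∀ B : Set (Set Ordinal.{0}),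
        ∃ g : List (Set Ordinal.{0}) → Set Ordinal.{0},
          (∀ L, g L ∈ PSet κ lam.ord) ∧ (B ∈ S → (B ∩ A) ∩ Club κ lam θ δ g = ∅) := by
      intro B
      by_cases hB : B ∈ S
      · obtain ⟨-, g, hgP, hBg⟩ := hNC (hS1 hB).2
        exact ⟨g, hgP, fun _ => hBg⟩
      · exact ⟨fun _ => ∅, fun _ => empty_mem_PSet hκ, fun h => absurd h hB⟩
    choose gB hgB1 hgB2 using hgBex
    have hpBex : ∀ (B : Set (Set Ordinal.{0})) (i : u.ord.ToType),
        ∃ a, a ∈ A ∧ a ∈ Club κ lam θ δ (gB B) ∧ yW (ψ i) ⊆ a :=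
      fun B i => club_pos hκ hθ2 hθκ hdl hκδ hℵ hJ hNid hAP hAN (gB B) (hgB1 B)
        (hyW_P (ψ i))
    choose pB hpB1 hpB2 hpB3 using hpBex
    set F' : Set (u.ord.ToType → Set Ordinal.{0}) := (fun B => pB B) '' S with hF'
    have hmem : #↥F' ∈ {c | ∃ F : Set (u.ord.ToType → Set Ordinal.{0}),
        #↥F = c ∧ (∀ f ∈ F, ∀ i, f i ∈ PSet κ lam.ord) ∧
        ∀ g : u.ord.ToType → Set Ordinal.{0}, (∀ i, g i ∈ PSet κ lam.ord) →
          ∃ f ∈ F, ∀ i, g i ⊆ f i} := by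
      refine ⟨F', rfl, ?_, ?_⟩
      · rintro f ⟨B, hBS, rfl⟩ i
        exact hAP (hpB1 B i)
      · intro h hh
        have hD : PSet κ lam.ord \ (A ∩ Club κ lam θ δ (gOf h)) ∈
            restrict κ lam.ord N A := by
          refine ⟨diff_subset, ?_⟩
          refine hNid.1.subset_mem _
            (compl_club_mem hκ hθ2 hθκ hdl hκδ hℵ hNid (gOf h) (hgOf_P h hh)) _ ?_
          rintro x ⟨⟨hxP, hxnot⟩, hxA⟩
          exact ⟨hxP, fun hxC => hxnot ⟨hxA, hxC⟩⟩
        obtain ⟨B, hBS, hBcov⟩ := hS3 _ hD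
        refine ⟨pB B, Set.mem_image_of_mem _ hBS, fun i => ?_⟩
        have haA := hpB1 B i
        have haC := hpB2 B i
        have haY := hpB3 B i
        have haP : pB B i ∈ PSet κ lam.ord := hAP haA
        have haB : pB B i ∉ B := by
          intro hmem
          have h2 := hgB2 B hBS
          rw [eq_empty_iff_forall_notMem] at h2
          exact h2 (pB B i) ⟨⟨hmem, haA⟩, haC⟩
        have haIn : pB B i ∈ A ∩ Club κ lam θ δ (gOf h) := by
          by_contra hcon
          exact haB (hBcov ⟨haP, hcon⟩)
        have hLgood := hvalGood (ψ i) (pB B i) haY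
        have hclo := haIn.2.2.2 ((ψ i).map Subtype.val) hLgood
        simp only [hgOfdef] at hclo
        rw [if_pos (hvalCond (ψ i)), hcov_val, Equiv.symm_apply_apply] at hclo
        exact hclo
    calc dNum κ lam.ord u ≤ #↥F' := csInf_le (OrderBot.bddBelow _) hmem
      _ ≤ #↥S := Cardinal.mk_image_le
      _ = cofIdeal (restrict κ lam.ord N A) := hS2

end PklNormal
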